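/- Let (L, M, N, ∂₂, ∂₁, {−,−}) be a 2-crossed module, K a field, and let K₁ = K(N) with basis {e_n}, and K₂ the quotient of the span of symbols v̄_{m,n} (images of e_{(m,n)} − e_{(1,n)}) modulo the relations v̄_{m'm,n} = v̄_{m,n} + v̄_{m', ∂₁(m)n}. For (m,n) ∈ M ⋊ N, define λ'_{m,n}: K₁ → K₂ by λ'_{m,n}(e_{n'}) = v̄_{ⁿ'm, n'n}, and let τ̄₂: K₂ → K₁ be the linear map with τ̄₂(v̄_{m,n}) = e_{∂₁(m)n} − e_n, and λ⁰_n: K₁ → K₁ with λ⁰_n(e_{n'}) = e_{n'n}. Then τ̄₂ ∘ λ'_{m,n} = λ⁰_{∂₁(m)n} − λ⁰_n. -/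

import Mathlib

/-- The relation submodule defining K₂: v̄_{m'm,n} = v̄_{m,n} + v̄_{m',∂₁(m)n}. -/
noncomputable def Rel2 (K : Type*) {M N : Type*} [Field K] [Group M] [Group N]
    (d1 : M →* N) : Submodule K ((M × N) →₀ K) :=
  Submodule.span K {x | ∃ (m m' : M) (n : N),
    x = Finsupp.single ((m' * m, n) : M × N) (1 : K)
      - Finsupp.single (m, n) 1 - Finsupp.single (m', d1 m * n) 1}

/-- τ̄₂ ∘ λ'_{m,n} = λ⁰_{∂₁(m)n} − λ⁰_n, where
λ'_{m,n}(e_{n'}) = v̄_{ⁿ'm, n'n}, τ̄₂(v̄_{m,n}) = e_{∂₁(m)n} − e_n and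
λ⁰_n(e_{n'}) = e_{n'n}. -/
theorem tau2_comp_lam_eq
    {K : Type*} [Field K]
    {L M N : Type*} [Group L] [Group M] [Group N]
    (phiM : N →* MulAut M) (phiL : N →* MulAut L)
    (d2 : L →* M) (d1 : M →* N) (pl : M → M → L)
    (hcomplex : ∀ l : L, d1 (d2 l) = 1)
    (heqv2 : ∀ (n : N) (l : L), d2 (phiL n l) = phiM n (d2 l))
    (heqv1 : ∀ (n : N) (m : M), d1 (phiM n m) = n * d1 m * n⁻¹)
    (h2cm1 : ∀ m m' : M, d2 (pl m m') = phiM (d1 m) m' * m * m'⁻¹ * m⁻¹)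
    (h2cm2 : ∀ l l' : L, pl (d2 l) (d2 l') = l' * l * l'⁻¹ * l⁻¹)
    (h2cm3i : ∀ m m' m'' : M,
      pl (m * m') m'' = phiL (d1 m) (pl m' m'') * pl m (m' * m'' * m'⁻¹))
    (h2cm3ii : ∀ m m' m'' : M,
      pl m (m' * m'') = pl m m' * (pl (d2 (pl m m'')) (m * m' * m⁻¹) * pl m m''))
    (h2cm4 : ∀ (m : M) (l : L), pl m (d2 l) * pl (d2 l) m = phiL (d1 m) l * l⁻¹)
    (h2cm5 : ∀ (n : N) (m m' : M), phiL n (pl m m') = pl (phiM n m) (phiM n m'))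
    (lam' : M → N → ((N →₀ K) →ₗ[K] (((M × N) →₀ K) ⧸ Rel2 K d1)))
    (hlam' : ∀ (m : M) (n n' : N),
      lam' m n (Finsupp.single n' 1) =
        Submodule.Quotient.mk
          (Finsupp.single ((phiM n' m, n' * n) : M × N) (1 : K)))
    (tau2 : (((M × N) →₀ K) ⧸ Rel2 K d1) →ₗ[K] (N →₀ K))
    (htau2 : ∀ (m : M) (n : N),
      tau2 (Submodule.Quotient.mk
          (Finsupp.single ((m, n) : M × N) (1 : K))) =
        Finsupp.single (d1 m * n) 1 - Finsupp.single n 1)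
    (lam0 : N → ((N →₀ K) →ₗ[K] (N →₀ K)))
    (hlam0 : ∀ n n' : N, lam0 n (Finsupp.single n' 1) = Finsupp.single (n' * n) 1) :
    ∀ (m : M) (n : N), tau2 ∘ₗ lam' m n = lam0 (d1 m * n) - lam0 n := by
  intro m n
  apply Finsupp.lhom_ext'
  intro n'
  ext r
  simp only [LinearMap.comp_apply, LinearMap.sub_apply, Finsupp.lsingle_apply]
  rw [hlam' m n n', htau2, hlam0, hlam0, heqv1]
  group
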